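/- Let 𝒳 ∈ ℂ^{n₁×n₂×n₃} admit a decomposition X_{ijk} = ∑_{ℓ=1}^{r} A_{iℓ} B_{jℓ} C_{kℓ} with factor matrices A ∈ ℂ^{n₁×r}, B ∈ ℂ^{n₂×r}, C ∈ ℂ^{n₃×r} of matrix ranks r₁, r₂, r₃ respectively. Then 𝒳 can be written as a sum of at most min(r₂r₃, r₁r₃, r₁r₂) rank-one tensors; i.e., there exist vectors u^{(ℓ)} ∈ ℂ^{n₁}, v^{(ℓ)} ∈ ℂ^{n₂}, w^{(ℓ)} ∈ ℂ^{n₃}, 1 ≤ ℓ ≤ min(r₂r₃, r₁r₃, r₁r₂), with X_{ijk} = ∑_ℓ u^{(ℓ)}_i v^{(ℓ)}_j w^{(ℓ)}_k. -/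

import Mathlib

/-- Rank factorization: a matrix of rank `r₁` factors through `Fin r₁`. -/
lemma exists_rank_factorization {n r r₁ : ℕ} (A : Matrix (Fin n) (Fin r) ℂ)
    (h : A.rank = r₁) :
    ∃ (A₁ : Matrix (Fin n) (Fin r₁) ℂ) (A₂ : Matrix (Fin r₁) (Fin r) ℂ),
      ∀ i ℓ, A i ℓ = ∑ p, A₁ i p * A₂ p ℓ := by
  have hfin : FiniteDimensional ℂ (LinearMap.range A.mulVecLin) := by infer_instance
  let b : Module.Basis (Fin r₁) ℂ (LinearMap.range A.mulVecLin) :=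
    Module.finBasisOfFinrankEq ℂ _ h
  have hcol : ∀ ℓ : Fin r, (fun i => A i ℓ) ∈ LinearMap.range A.mulVecLin := by
    intro ℓ
    exact ⟨Pi.single ℓ 1, by simp [Matrix.mulVecLin]; rfl⟩
  refine ⟨fun i p => (b p : Fin n → ℂ) i,
    fun p ℓ => b.repr ⟨_, hcol ℓ⟩ p, fun i ℓ => ?_⟩
  have := b.sum_repr ⟨fun i => A i ℓ, hcol ℓ⟩
  have h2 := congrFun (congrArg Subtype.val this) i
  simp only [Submodule.coe_sum, Submodule.coe_smul, Finset.sum_apply,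
    Pi.smul_apply, smul_eq_mul] at h2
  rw [← h2]
  exact Finset.sum_congr rfl fun p _ => mul_comm _ _

lemma key {n₁ n₂ n₃ r r₁ r₂ : ℕ}
    (A : Matrix (Fin n₁) (Fin r) ℂ) (B : Matrix (Fin n₂) (Fin r) ℂ)
    (C : Matrix (Fin n₃) (Fin r) ℂ)
    (hr₁ : A.rank = r₁) (hr₂ : B.rank = r₂)
    (X : Fin n₁ → Fin n₂ → Fin n₃ → ℂ)
    (hX : ∀ i j k, X i j k = ∑ ℓ, A i ℓ * B j ℓ * C k ℓ) :
    ∃ (u : Fin (r₁ * r₂) → Fin n₁ → ℂ) (v : Fin (r₁ * r₂) → Fin n₂ → ℂ)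
      (w : Fin (r₁ * r₂) → Fin n₃ → ℂ),
      ∀ i j k, X i j k = ∑ ℓ, u ℓ i * v ℓ j * w ℓ k := by
  obtain ⟨A₁, A₂, hA⟩ := exists_rank_factorization A hr₁
  obtain ⟨B₁, B₂, hB⟩ := exists_rank_factorization B hr₂
  refine ⟨fun m i => A₁ i (finProdFinEquiv.symm m).1,
    fun m j => B₁ j (finProdFinEquiv.symm m).2,
    fun m k => ∑ ℓ, A₂ (finProdFinEquiv.symm m).1 ℓ * B₂ (finProdFinEquiv.symm m).2 ℓ * C k ℓ,
    fun i j k => ?_⟩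
  rw [hX]
  trans (∑ pq : Fin r₁ × Fin r₂, A₁ i pq.1 * B₁ j pq.2 * ∑ ℓ, A₂ pq.1 ℓ * B₂ pq.2 ℓ * C k ℓ)
  swap
  · exact Fintype.sum_equiv finProdFinEquiv _ _ (fun pq => by simp)
  simp only [hA, hB, Finset.sum_mul, Finset.mul_sum, Fintype.sum_prod_type]
  rw [Finset.sum_comm]
  conv_lhs => enter [2]; ext q; rw [Finset.sum_comm]
  rw [Finset.sum_comm]
  apply Finset.sum_congr rfl
  intro p _
  apply Finset.sum_congr rfl
  intro q _
  apply Finset.sum_congr rfl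
  intro ℓ _
  ring


/-- Paper's inequality (2.5): if `X_{ijk} = ∑_ℓ A_{iℓ} B_{jℓ} C_{kℓ}` is a CP
decomposition with factor matrices of ranks `r₁, r₂, r₃`, then `X` is a sum of
at most `min (r₂r₃) (min (r₁r₃) (r₁r₂))` rank-one tensors. -/
theorem cp_rank_le_of_factor_ranks
    (n₁ n₂ n₃ r : ℕ)
    (A : Matrix (Fin n₁) (Fin r) ℂ) (B : Matrix (Fin n₂) (Fin r) ℂ)
    (C : Matrix (Fin n₃) (Fin r) ℂ)
    (r₁ r₂ r₃ : ℕ) (hr₁ : A.rank = r₁) (hr₂ : B.rank = r₂) (hr₃ : C.rank = r₃)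
    (X : Fin n₁ → Fin n₂ → Fin n₃ → ℂ)
    (hX : ∀ i j k, X i j k = ∑ ℓ, A i ℓ * B j ℓ * C k ℓ) :
    ∃ (u : Fin (min (r₂ * r₃) (min (r₁ * r₃) (r₁ * r₂))) → Fin n₁ → ℂ)
      (v : Fin (min (r₂ * r₃) (min (r₁ * r₃) (r₁ * r₂))) → Fin n₂ → ℂ)
      (w : Fin (min (r₂ * r₃) (min (r₁ * r₃) (r₁ * r₂))) → Fin n₃ → ℂ),
      ∀ i j k, X i j k = ∑ ℓ, u ℓ i * v ℓ j * w ℓ k := by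
  rcases min_cases (r₂ * r₃) (min (r₁ * r₃) (r₁ * r₂)) with ⟨h, _⟩ | ⟨h, _⟩
  · rw [h]
    obtain ⟨u', v', w', hrep⟩ := key B C A hr₂ hr₃ (fun j k i => X i j k)
      (fun j k i => by show X _ _ _ = _; rw [hX]; exact Finset.sum_congr rfl fun ℓ _ => by ring)
    exact ⟨fun m i => w' m i, fun m j => u' m j, fun m k => v' m k,
      fun i j k => (hrep j k i).trans
        (Finset.sum_congr rfl fun ℓ _ => by ring)⟩
  · rcases min_cases (r₁ * r₃) (r₁ * r₂) with ⟨h2, _⟩ | ⟨h2, _⟩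
    · rw [h, h2]
      obtain ⟨u', v', w', hrep⟩ := key A C B hr₁ hr₃ (fun i k j => X i j k)
        (fun i k j => by show X _ _ _ = _; rw [hX]; exact Finset.sum_congr rfl fun ℓ _ => by ring)
      exact ⟨fun m i => u' m i, fun m j => w' m j, fun m k => v' m k,
        fun i j k => (hrep i k j).trans
          (Finset.sum_congr rfl fun ℓ _ => by ring)⟩
    · rw [h, h2]
      obtain ⟨u', v', w', hrep⟩ := key A B C hr₁ hr₂ X hX
      exact ⟨u', v', w', hrep⟩
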